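/- Let (λ,μ) and (λ',μ') be bipartitions of n that are adjacent in the dominance order on bipartitions with (λ,μ) ⊴ (λ',μ') and (λ,μ) ≠ (λ',μ'). Then exactly one of the following holds: (a) μ = μ' and λ' is obtained from λ by increasing one part by 1 and decreasing a later part by 1; (b) λ = λ' and μ' is obtained from μ by increasing one part by 1 and decreasing a later part by 1; (c) |λ| < |λ'|, λ' is obtained from λ by increasing one part by 1, and μ' is obtained from μ by decreasing one part by 1. -/

import Mathlib

/-- Partial sum of the first `d` parts of a partition (given as a function). -/
def psum (f : ℕ → ℕ) (d : ℕ) : ℕ := ∑ i ∈ Finset.range d, f i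

/-- A bipartition of `n`: two weakly decreasing, eventually zero functions
whose total sums add up to `n`. -/
def IsBip (n : ℕ) (l m : ℕ → ℕ) : Prop :=
  Antitone l ∧ Antitone m ∧ (∃ N, ∀ i, N ≤ i → l i = 0) ∧
  (∃ N, ∀ i, N ≤ i → m i = 0) ∧ (∑ᶠ i, l i) + (∑ᶠ i, m i) = n

/-- Dominance order on bipartitions (Dipper–James–Murphy). -/
def BDom (l m l' m' : ℕ → ℕ) : Prop :=
  (∀ d, psum l d ≤ psum l' d) ∧
  ∀ d, (∑ᶠ i, l i) + psum m d ≤ (∑ᶠ i, l' i) + psum m' d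

/-- `f'` is obtained from `f` by increasing one part by 1 and decreasing a
later part by 1. -/
def IncDec (f f' : ℕ → ℕ) : Prop :=
  ∃ i j, i < j ∧ f' i = f i + 1 ∧ f' j + 1 = f j ∧
    ∀ t, t ≠ i → t ≠ j → f' t = f t

/-- `f'` is obtained from `f` by increasing one part by 1. -/
def IncOne (f f' : ℕ → ℕ) : Prop :=
  ∃ i, f' i = f i + 1 ∧ ∀ t, t ≠ i → f' t = f t

lemma psum_succ (f : ℕ → ℕ) (d : ℕ) : psum f (d+1) = psum f d + f d :=
  Finset.sum_range_succ f d

lemma psum_zero (f : ℕ → ℕ) : psum f 0 = 0 := by simp [psum]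

lemma psum_stable (f : ℕ → ℕ) (N : ℕ) (h0 : ∀ i, N ≤ i → f i = 0) :
    ∀ d, N ≤ d → psum f d = psum f N := by
  intro d hd
  induction d with
  | zero => have : N = 0 := by omega
            rw [this]
  | succ d ih =>
    rcases Nat.lt_or_ge N (d+1) with h | h
    · have hNd : N ≤ d := by omega
      rw [psum_succ, ih hNd, h0 d hNd]
      omega
    · have : N = d + 1 := by omega
      rw [this]

lemma finsum_eq_psum (f : ℕ → ℕ) (N : ℕ) (h0 : ∀ i, N ≤ i → f i = 0) :
    (∑ᶠ i, f i) = psum f N := by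
  apply finsum_eq_sum_of_support_subset
  intro x hx
  simp only [Function.mem_support] at hx
  simp only [Finset.coe_range, Set.mem_Iio]
  by_contra h
  push_neg at h
  exact hx (h0 x h)

def up (f : ℕ → ℕ) (i : ℕ) : ℕ → ℕ := fun t => if t = i then f t + 1 else f t
def down (f : ℕ → ℕ) (j : ℕ) : ℕ → ℕ := fun t => if t = j then f t - 1 else f t
def bump (f : ℕ → ℕ) (i j : ℕ) : ℕ → ℕ :=
  fun t => if t = i then f t + 1 else if t = j then f t - 1 else f t

lemma psum_up (f : ℕ → ℕ) (i : ℕ) (d : ℕ) :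
    psum (up f i) d = psum f d + (if i < d then 1 else 0) := by
  induction d with
  | zero => simp [psum]
  | succ d ih =>
    rw [psum_succ, psum_succ, ih]
    simp only [up]
    by_cases h : d = i
    · subst h; split_ifs <;> omega
    · rw [if_neg h]; split_ifs <;> omega

lemma psum_down (f : ℕ → ℕ) (j : ℕ) (hfj : 1 ≤ f j) (d : ℕ) :
    psum (down f j) d + (if j < d then 1 else 0) = psum f d := by
  induction d with
  | zero => simp [psum]
  | succ d ih =>
    rw [psum_succ, psum_succ]
    simp only [down]
    by_cases h : d = j
    · subst h; split_ifs at ih ⊢ <;> omega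
    · rw [if_neg h]; split_ifs at ih ⊢ <;> omega

lemma psum_bump (f : ℕ → ℕ) (i j : ℕ) (hij : i < j) (hfj : 1 ≤ f j) (d : ℕ) :
    psum (bump f i j) d = psum f d + (if i < d ∧ d ≤ j then 1 else 0) := by
  induction d with
  | zero => simp [psum]
  | succ d ih =>
    rw [psum_succ, psum_succ, ih]
    simp only [bump]
    by_cases h1 : d = i
    · subst h1; rw [if_pos rfl]; split_ifs <;> omega
    · rw [if_neg h1]
      by_cases h2 : d = j
      · subst h2; rw [if_pos rfl]; split_ifs <;> omega
      · rw [if_neg h2]; split_ifs <;> omega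

lemma antitone_up (f : ℕ → ℕ) (i : ℕ) (hf : Antitone f)
    (hi : ∀ t, t + 1 = i → f i < f t) : Antitone (up f i) := by
  apply antitone_nat_of_succ_le
  intro t
  have h1 : f (t+1) ≤ f t := hf (Nat.le_succ t)
  simp only [up]
  by_cases e1 : t + 1 = i
  · have h2 := hi t e1
    rw [if_pos e1, if_neg (show t ≠ i by omega), e1]
    omega
  · rw [if_neg e1]
    by_cases e2 : t = i
    · rw [if_pos e2]; omega
    · rw [if_neg e2]; omega

lemma antitone_down (f : ℕ → ℕ) (j : ℕ) (hf : Antitone f)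
    (hj : f (j+1) < f j) : Antitone (down f j) := by
  apply antitone_nat_of_succ_le
  intro t
  have h1 : f (t+1) ≤ f t := hf (Nat.le_succ t)
  simp only [down]
  by_cases e1 : t + 1 = j
  · have h2 : f j ≤ f t := hf (by omega)
    rw [if_pos e1, if_neg (show t ≠ j by omega), e1]
    omega
  · rw [if_neg e1]
    by_cases e2 : t = j
    · subst e2; rw [if_pos rfl]; omega
    · rw [if_neg e2]; omega

lemma antitone_bump (f : ℕ → ℕ) (i j : ℕ) (hf : Antitone f) (hij : i < j)
    (hi : ∀ t, t + 1 = i → f i < f t) (hj : f (j+1) < f j) : Antitone (bump f i j) := by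
  apply antitone_nat_of_succ_le
  intro t
  have h1 : f (t+1) ≤ f t := hf (Nat.le_succ t)
  have h2 : f j ≤ f i := hf hij.le
  simp only [bump]
  by_cases e3 : t = i
  · subst e3
    rw [if_neg (show ¬(t + 1 = t) by omega), if_pos rfl]
    by_cases e2 : t + 1 = j
    · rw [if_pos e2]; omega
    · rw [if_neg e2]; omega
  · by_cases e4 : t = j
    · subst e4
      rw [if_neg (show ¬(t+1 = i) by omega), if_neg (show ¬(t+1 = t) by omega),
        if_neg e3, if_pos rfl]
      omega
    · rw [if_neg e3, if_neg e4]
      by_cases e1 : t + 1 = i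
      · have h3 := hi t e1
        rw [if_pos e1, e1]
        omega
      · rw [if_neg e1]
        by_cases e2 : t + 1 = j
        · rw [if_pos e2]; omega
        · rw [if_neg e2]; omega

lemma first_diff (f f' : ℕ → ℕ) (hps : ∀ d, psum f d ≤ psum f' d) (hne : f ≠ f') :
    ∃ i, f i < f' i ∧ ∀ t, t < i → f t = f' t := by
  classical
  have h := Function.ne_iff.1 hne
  have hpre : ∀ t, t < Nat.find h → f t = f' t := fun t ht => not_not.1 (Nat.find_min h ht)
  refine ⟨Nat.find h, ?_, hpre⟩
  have he : psum f (Nat.find h) = psum f' (Nat.find h) :=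
    Finset.sum_congr rfl fun t ht => hpre t (Finset.mem_range.1 ht)
  have h2 := hps (Nat.find h + 1)
  rw [psum_succ, psum_succ, he] at h2
  exact lt_of_le_of_ne (by omega) (Nat.find_spec h)

lemma internal_move (f f' : ℕ → ℕ) (hf : Antitone f) (hf' : Antitone f')
    (i : ℕ) (hlt : f i < f' i) (hpre : ∀ t, t < i → f t = f' t)
    (hps : ∀ d, psum f d ≤ psum f' d)
    (hex : ∃ k, i < k ∧ psum f k = psum f' k) :
    ∃ g j, i < j ∧ 1 ≤ f j ∧ Antitone g ∧
      g i = f i + 1 ∧ g j + 1 = f j ∧ (∀ t, t ≠ i → t ≠ j → g t = f t) ∧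
      (∀ d, psum f d ≤ psum g d) ∧ (∀ d, psum g d ≤ psum f' d) ∧
      (∀ d, j < d → psum g d = psum f d) := by
  classical
  have hpre_sum : ∀ d, d ≤ i → psum f d = psum f' d := by
    intro d hd
    exact Finset.sum_congr rfl fun t ht => hpre t (by have := Finset.mem_range.1 ht; omega)
  set k := Nat.find hex with hk_def
  have hk : i < k ∧ psum f k = psum f' k := Nat.find_spec hex
  have hmin : ∀ d, d < k → ¬(i < d ∧ psum f d = psum f' d) := fun d hd => Nat.find_min hex hd
  have hstrict : ∀ d, i < d → d < k → psum f d < psum f' d := by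
    intro d hd1 hd2
    exact lt_of_le_of_ne (hps d) fun e => hmin d hd2 ⟨hd1, e⟩
  have hi1 : psum f (i+1) < psum f' (i+1) := by
    rw [psum_succ, psum_succ, hpre_sum i le_rfl]
    omega
  have hik : i + 1 < k := by
    rcases Nat.lt_or_ge (i+1) k with h | h
    · exact h
    · exfalso
      have hki : k = i + 1 := by omega
      rw [hki] at hk
      omega
  have hkk : k = (k - 1) + 1 := by omega
  have hij : i < k - 1 := by omega
  have hj1 : psum f (k-1) < psum f' (k-1) := hstrict (k-1) hij (by omega)
  have hjval : f' (k-1) < f (k-1) := by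
    have h5 := hk.2
    rw [hkk, psum_succ, psum_succ] at h5
    omega
  have hkval : f ((k-1)+1) ≤ f' ((k-1)+1) := by
    have h5 := hps (k+1)
    rw [psum_succ, psum_succ, hk.2] at h5
    have h6 : f k ≤ f' k := by omega
    rwa [hkk] at h6
  have hjj : f ((k-1)+1) < f (k-1) := by
    have h3 : f' ((k-1)+1) ≤ f' (k-1) := hf' (Nat.le_succ _)
    omega
  have hfj : 1 ≤ f (k-1) := by omega
  have hic : ∀ t, t + 1 = i → f i < f t := by
    intro t ht
    have h4 : f t = f' t := hpre t (by omega)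
    have h5 : f' i ≤ f' t := hf' (by omega)
    omega
  refine ⟨bump f i (k-1), k-1, hij, hfj,
    antitone_bump f i (k-1) hf hij hic hjj, ?_, ?_, ?_, ?_, ?_, ?_⟩
  · simp [bump]
  · have hbv : bump f i (k-1) (k-1) = f (k-1) - 1 := by
      simp [bump, show ¬(k-1 = i) by omega]
    rw [hbv]
    omega
  · intro t h1 h2
    simp [bump, h1, h2]
  · intro d
    rw [psum_bump f i (k-1) hij hfj]
    split_ifs <;> omega
  · intro d
    rw [psum_bump f i (k-1) hij hfj]
    split_ifs with h
    · have := hstrict d h.1 (by omega)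
      omega
    · have := hps d
      omega
  · intro d hd
    rw [psum_bump f i (k-1) hij hfj, if_neg (by omega : ¬(i < d ∧ d ≤ k-1))]
    omega

theorem adjacent_bipartitions_trichotomy (n : ℕ) (l m l' m' : ℕ → ℕ)
    (hb : IsBip n l m) (hb' : IsBip n l' m')
    (hdom : BDom l m l' m') (hne : ¬ (l = l' ∧ m = m'))
    (hadj : ∀ l'' m'', IsBip n l'' m'' → BDom l m l'' m'' → BDom l'' m'' l' m' →
      (l'' = l ∧ m'' = m) ∨ (l'' = l' ∧ m'' = m')) :
    ((m = m' ∧ IncDec l l') ∧ ¬(l = l' ∧ IncDec m m') ∧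
        ¬((∑ᶠ i, l i) < (∑ᶠ i, l' i) ∧ IncOne l l' ∧ IncOne m' m)) ∨
    (¬(m = m' ∧ IncDec l l') ∧ (l = l' ∧ IncDec m m') ∧
        ¬((∑ᶠ i, l i) < (∑ᶠ i, l' i) ∧ IncOne l l' ∧ IncOne m' m)) ∨
    (¬(m = m' ∧ IncDec l l') ∧ ¬(l = l' ∧ IncDec m m') ∧
        ((∑ᶠ i, l i) < (∑ᶠ i, l' i) ∧ IncOne l l' ∧ IncOne m' m)) := by
  classical
  obtain ⟨hal, ham, ⟨N1, hN1⟩, ⟨N2, hN2⟩, hsum⟩ := hb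
  obtain ⟨hal', ham', ⟨N3, hN3⟩, ⟨N4, hN4⟩, hsum'⟩ := hb'
  set N := max (max N1 N2) (max N3 N4) + 1 with hN_def
  have hNpos : 0 < N := Nat.succ_pos _
  have b1 : N1 ≤ N := le_trans (le_trans (le_max_left _ _) (le_max_left _ _)) (Nat.le_succ _)
  have b2 : N2 ≤ N := le_trans (le_trans (le_max_right _ _) (le_max_left _ _)) (Nat.le_succ _)
  have b3 : N3 ≤ N := le_trans (le_trans (le_max_left _ _) (le_max_right _ _)) (Nat.le_succ _)
  have b4 : N4 ≤ N := le_trans (le_trans (le_max_right _ _) (le_max_right _ _)) (Nat.le_succ _)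
  have hlN : ∀ t, N ≤ t → l t = 0 := fun t ht => hN1 t (b1.trans ht)
  have hmN : ∀ t, N ≤ t → m t = 0 := fun t ht => hN2 t (b2.trans ht)
  have hl'N : ∀ t, N ≤ t → l' t = 0 := fun t ht => hN3 t (b3.trans ht)
  have hm'N : ∀ t, N ≤ t → m' t = 0 := fun t ht => hN4 t (b4.trans ht)
  have hA := hdom.1
  have hB := hdom.2
  have eSl : (∑ᶠ i, l i) = psum l N := finsum_eq_psum l N hlN
  have eSm : (∑ᶠ i, m i) = psum m N := finsum_eq_psum m N hmN
  have eSl' : (∑ᶠ i, l' i) = psum l' N := finsum_eq_psum l' N hl'N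
  have eSm' : (∑ᶠ i, m' i) = psum m' N := finsum_eq_psum m' N hm'N
  have htot : psum l N + psum m N = n := by rw [← eSl, ← eSm]; exact hsum
  have htot' : psum l' N + psum m' N = n := by rw [← eSl', ← eSm']; exact hsum'
  have hD : (m = m' ∧ IncDec l l') ∨ (l = l' ∧ IncDec m m') ∨
      ((∑ᶠ i, l i) < (∑ᶠ i, l' i) ∧ IncOne l l' ∧ IncOne m' m) := by
    by_cases hll : l = l'
    · -- Case I : only m changes
      right; left
      refine ⟨hll, ?_⟩
      subst hll
      have hmm : m ≠ m' := fun h => hne ⟨rfl, h⟩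
      have hps : ∀ d, psum m d ≤ psum m' d := fun d => by have := hB d; omega
      obtain ⟨i, hlt, hpre⟩ := first_diff m m' hps hmm
      have hiN : i < N := by
        by_contra hc; push_neg at hc
        have := hm'N i hc; omega
      have hmN_eq : psum m N = psum m' N := by omega
      have hex : ∃ k, i < k ∧ psum m k = psum m' k := by
        refine ⟨max N (i+1), (Nat.lt_succ_self i).trans_le (le_max_right N (i+1)), ?_⟩
        rw [psum_stable m N hmN _ (le_max_left _ _),
          psum_stable m' N hm'N _ (le_max_left _ _), hmN_eq]
      obtain ⟨g, j, hij, hfj, hag, hgi, hgj, hgo, hg1, hg2, hg3⟩ :=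
        internal_move m m' ham ham' i hlt hpre hps hex
      have hjN : j < N := by
        by_contra hc; push_neg at hc
        have := hmN j hc; omega
      have hgN : ∀ t, N ≤ t → g t = 0 := fun t ht => by
        rw [hgo t (by omega) (by omega)]; exact hmN t ht
      have hSg : (∑ᶠ t, g t) = ∑ᶠ i, m i := by
        rw [finsum_eq_psum g N hgN, eSm, hg3 N (by omega)]
      have hbip : IsBip n l g := ⟨hal, hag, ⟨N, hlN⟩, ⟨N, hgN⟩, by rw [hSg]; exact hsum⟩
      have hd1 : BDom l m l g := ⟨fun d => le_rfl, fun d => by have := hg1 d; omega⟩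
      have hd2 : BDom l g l m' := ⟨fun d => le_rfl, fun d => by have := hg2 d; omega⟩
      rcases hadj l g hbip hd1 hd2 with ⟨-, hgm⟩ | ⟨-, hgm⟩
      · exfalso
        have := congrFun hgm i
        rw [hgi] at this
        omega
      · exact ⟨i, j, hij, by rw [← hgm]; exact hgi, by rw [← hgm]; exact hgj,
          fun t h1 h2 => by rw [← hgm]; exact hgo t h1 h2⟩
    · -- l ≠ l'
      obtain ⟨i, hlt, hpre⟩ := first_diff l l' hA hll
      have hiN : i < N := by
        by_contra hc; push_neg at hc
        have := hl'N i hc; omega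
      by_cases hcc : ∃ k, i < k ∧ psum l k = psum l' k
      · -- Case II : internal move in l
        left
        obtain ⟨g, j, hij, hfj, hag, hgi, hgj, hgo, hg1, hg2, hg3⟩ :=
          internal_move l l' hal hal' i hlt hpre hA hcc
        have hjN : j < N := by
          by_contra hc; push_neg at hc
          have := hlN j hc; omega
        have hgN : ∀ t, N ≤ t → g t = 0 := fun t ht => by
          rw [hgo t (by omega) (by omega)]; exact hlN t ht
        have hSg : (∑ᶠ t, g t) = ∑ᶠ i, l i := by
          rw [finsum_eq_psum g N hgN, eSl, hg3 N (by omega)]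
        have hbip : IsBip n g m := ⟨hag, ham, ⟨N, hgN⟩, ⟨N, hmN⟩, by rw [hSg]; exact hsum⟩
        have hd1 : BDom l m g m := ⟨hg1, fun d => by rw [hSg]⟩
        have hd2 : BDom g m l' m' := ⟨hg2, fun d => by rw [hSg]; exact hB d⟩
        rcases hadj g m hbip hd1 hd2 with ⟨hgl, -⟩ | ⟨hgl, hmm⟩
        · exfalso
          have := congrFun hgl i
          rw [hgi] at this
          omega
        · exact ⟨hmm, i, j, hij, by rw [← hgl]; exact hgi, by rw [← hgl]; exact hgj,
            fun t h1 h2 => by rw [← hgl]; exact hgo t h1 h2⟩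
      · -- Case III : |l| < |l'|
        push_neg at hcc
        have hAlt : ∀ d, i < d → psum l d < psum l' d :=
          fun d hd => lt_of_le_of_ne (hA d) (hcc d hd)
        have hSlt : psum l N < psum l' N := hAlt N hiN
        have hSlt' : (∑ᶠ i, l i) < ∑ᶠ i, l' i := by rw [eSl, eSl']; exact hSlt
        have hex : ∃ d, (∑ᶠ i, l i) + psum m d = (∑ᶠ i, l' i) + psum m' d :=
          ⟨N, by rw [eSl, eSl']; omega⟩
        set k := Nat.find hex with hk_def
        have hkspec : (∑ᶠ i, l i) + psum m k = (∑ᶠ i, l' i) + psum m' k := Nat.find_spec hex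
        have hkmin : ∀ d, d < k → (∑ᶠ i, l i) + psum m d ≠ (∑ᶠ i, l' i) + psum m' d :=
          fun d hd => Nat.find_min hex hd
        have hk0 : 0 < k := by
          rcases Nat.eq_zero_or_pos k with h | h
          · exfalso
            rw [h, psum_zero, psum_zero] at hkspec
            omega
          · exact h
        have hBs : ∀ d, d < k → (∑ᶠ i, l i) + psum m d < (∑ᶠ i, l' i) + psum m' d :=
          fun d hd => lt_of_le_of_ne (hB d) (hkmin d hd)
        have hkk : k = (k-1) + 1 := by omega
        have hstep : m' (k-1) < m (k-1) := by
          have h1 := hBs (k-1) (by omega)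
          have h2 := hkspec
          rw [hkk, psum_succ, psum_succ] at h2
          omega
        have hstep2 : m k ≤ m' k := by
          have h1 := hB (k+1)
          rw [psum_succ, psum_succ] at h1
          omega
        have hmk : m k < m (k-1) := by
          have h3 : m' k ≤ m' (k-1) := ham' (by omega)
          omega
        have hm1 : 1 ≤ m (k-1) := by omega
        by_cases hk1 : k = 1
        · -- move of type (c)
          right; right
          have hm01 : m 1 < m 0 := by
            rw [hk1] at hmk
            simpa using hmk
          have hm0 : 1 ≤ m 0 := by omega
          have hal2 : Antitone (up l i) := antitone_up l i hal (fun t ht => by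
            have h4 : l t = l' t := hpre t (by omega)
            have h5 : l' i ≤ l' t := hal' (by omega)
            omega)
          have ham2 : Antitone (down m 0) := antitone_down m 0 ham (by simpa using hm01)
          have hl2N : ∀ t, N ≤ t → up l i t = 0 := fun t ht => by
            simp only [up, if_neg (show ¬(t = i) by omega)]
            exact hlN t ht
          have hm2N : ∀ t, N ≤ t → down m 0 t = 0 := fun t ht => by
            simp only [down, if_neg (show ¬(t = 0) by omega)]
            exact hmN t ht
          have hpl2 : ∀ d, psum (up l i) d = psum l d + (if i < d then 1 else 0) := psum_up l i
          have hpm2 : ∀ d, psum (down m 0) d + (if 0 < d then 1 else 0) = psum m d :=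
            psum_down m 0 hm0
          have eS2 : (∑ᶠ t, up l i t) = psum l N + 1 := by
            rw [finsum_eq_psum (up l i) N hl2N, hpl2 N, if_pos hiN]
          have eM2 : (∑ᶠ t, down m 0 t) + 1 = psum m N := by
            rw [finsum_eq_psum (down m 0) N hm2N]
            have h6 := hpm2 N
            rwa [if_pos hNpos] at h6
          have hbip : IsBip n (up l i) (down m 0) := by
            refine ⟨hal2, ham2, ⟨N, hl2N⟩, ⟨N, hm2N⟩, ?_⟩
            rw [finsum_eq_psum (up l i) N hl2N, finsum_eq_psum (down m 0) N hm2N,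
              hpl2 N, if_pos hiN]
            have h6 := hpm2 N
            rw [if_pos hNpos] at h6
            omega
          have hd1 : BDom l m (up l i) (down m 0) := by
            refine ⟨fun d => ?_, fun d => ?_⟩
            · rw [hpl2 d]; split_ifs <;> omega
            · have h6 := hpm2 d
              rw [eS2, eSl]
              split_ifs at h6 <;> omega
          have hd2 : BDom (up l i) (down m 0) l' m' := by
            refine ⟨fun d => ?_, fun d => ?_⟩
            · rw [hpl2 d]
              split_ifs with h
              · have := hAlt d h; omega
              · have := hA d; omega
            · rcases Nat.eq_zero_or_pos d with h | h
              · subst h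
                rw [psum_zero, psum_zero, eS2, eSl']
                omega
              · have h6 := hpm2 d
                rw [if_pos h] at h6
                have h7 := hB d
                rw [eSl] at h7
                rw [eS2]
                omega
          rcases hadj (up l i) (down m 0) hbip hd1 hd2 with ⟨h8, -⟩ | ⟨h8, h9⟩
          · exfalso
            have := congrFun h8 i
            simp [up] at this
          · refine ⟨hSlt', ⟨i, ?_, ?_⟩, ⟨0, ?_, ?_⟩⟩
            · rw [← h8]; simp [up]
            · intro t ht; rw [← h8]; simp [up, ht]
            · have hdv : down m 0 0 = m 0 - 1 := by simp [down]
              rw [← h9, hdv]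
              omega
            · intro t ht; rw [← h9]; simp [down, ht]
        · -- k ≥ 2 : contradiction via internal move in m
          exfalso
          have h0k : 0 < k - 1 := by omega
          have hic : ∀ t, t + 1 = 0 → m 0 < m t := fun t ht => absurd ht (by omega)
          have hjj : m ((k-1)+1) < m (k-1) := by
            rw [show k-1+1 = k by omega]
            exact hmk
          have hag : Antitone (bump m 0 (k-1)) := antitone_bump m 0 (k-1) ham h0k hic hjj
          have hpg : ∀ d, psum (bump m 0 (k-1)) d = psum m d + (if 0 < d ∧ d ≤ k-1 then 1 else 0) :=
            psum_bump m 0 (k-1) h0k hm1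
          have hkN : k - 1 < N := by
            by_contra hc; push_neg at hc
            have := hmN (k-1) hc; omega
          have hgN : ∀ t, N ≤ t → bump m 0 (k-1) t = 0 := fun t ht => by
            simp only [bump, if_neg (show ¬(t = 0) by omega), if_neg (show ¬(t = k-1) by omega)]
            exact hmN t ht
          have hSg : (∑ᶠ t, bump m 0 (k-1) t) = ∑ᶠ i, m i := by
            rw [finsum_eq_psum (bump m 0 (k-1)) N hgN, eSm, hpg N,
              if_neg (show ¬(0 < N ∧ N ≤ k-1) by omega)]
            omega
          have hbip : IsBip n l (bump m 0 (k-1)) := ⟨hal, hag, ⟨N, hlN⟩, ⟨N, hgN⟩, by rw [hSg]; exact hsum⟩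
          have hd1 : BDom l m l (bump m 0 (k-1)) :=
            ⟨fun d => le_rfl, fun d => by have := hpg d; split_ifs at this <;> omega⟩
          have hd2 : BDom l (bump m 0 (k-1)) l' m' := by
            refine ⟨hA, fun d => ?_⟩
            have h6 := hpg d
            by_cases h7 : 0 < d ∧ d ≤ k - 1
            · rw [if_pos h7] at h6
              have := hBs d (by omega)
              omega
            · rw [if_neg h7] at h6
              have := hB d
              omega
          rcases hadj l (bump m 0 (k-1)) hbip hd1 hd2 with ⟨-, h8⟩ | ⟨h8, -⟩
          · have := congrFun h8 0
            simp [bump] at this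
          · exact hll h8
  rcases hD with ⟨h1, h2⟩ | ⟨h1, h2⟩ | ⟨h1, h2, h3⟩
  · left
    refine ⟨⟨h1, h2⟩, ?_, ?_⟩
    · rintro ⟨-, i0, j0, -, hv, -, -⟩
      rw [← h1] at hv
      omega
    · rintro ⟨-, -, i0, hv, -⟩
      rw [h1] at hv
      omega
  · right; left
    refine ⟨?_, ⟨h1, h2⟩, ?_⟩
    · rintro ⟨-, i0, j0, -, hv, -, -⟩
      rw [← h1] at hv
      omega
    · rintro ⟨-, ⟨i0, hv, -⟩, -⟩
      rw [← h1] at hv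
      omega
  · right; right
    refine ⟨?_, ?_, h1, h2, h3⟩
    · rintro ⟨hmm, -⟩
      obtain ⟨i0, hv, -⟩ := h3
      rw [hmm] at hv
      omega
    · rintro ⟨hll, -⟩
      obtain ⟨i0, hv, -⟩ := h2
      rw [← hll] at hv
      omega
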